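/- Let H be an r-uniform hypergraph and let P be a Berge path in H with terminal vertex v0. Let 𝒫(P, v0) be the set of all Berge paths Q in H having v0 as a terminal vertex and having the same set of defining vertices and the same set of defining edges as P; for Q ∈ 𝒫(P, v0) let τ(Q) denote the terminal vertex of Q other than v0. Then there exists a nonempty subset 𝒫′ ⊆ 𝒫(P, v0) such that the number of defining edges of P that meet the set τ(𝒫′) = {τ(Q) : Q ∈ 𝒫′} is at most 2·|τ(𝒫′)| − 1. -/
import Mathlib


/-- A Berge path of length `k` in a hypergraph with edge set `E`: an alternating
sequence of `k+1` distinct vertices `v 0, …, v k` and `k` distinct edges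
`e 0, …, e (k-1)` of `E` with `v i, v (i+1) ∈ e i` for each `i`. -/
def IsBergePath {V : Type*} [DecidableEq V] (E : Finset (Finset V)) (k : ℕ)
    (v : Fin (k + 1) → V) (e : Fin k → Finset V) : Prop :=
  Function.Injective v ∧ Function.Injective e ∧
    (∀ i, e i ∈ E) ∧ ∀ i : Fin k, v i.castSucc ∈ e i ∧ v i.succ ∈ e i

/-- Rotation permutation on vertex indices. -/
def rotσ {l : ℕ} (i : Fin l) (m : Fin (l+1)) : Fin (l+1) :=
  if _h : (m : ℕ) ≤ (i : ℕ) then m else ⟨l + (i : ℕ) + 1 - (m : ℕ), by omega⟩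

/-- Rotation permutation on edge indices. -/
def rotπ {l : ℕ} (i : Fin l) (m : Fin l) : Fin l :=
  if _h : (m : ℕ) ≤ (i : ℕ) then m
  else ⟨l + (i : ℕ) - (m : ℕ), by have := i.isLt; have := m.isLt; omega⟩

lemma rotσ_val {l : ℕ} (i : Fin l) (m : Fin (l+1)) :
    (rotσ i m : ℕ) = if (m : ℕ) ≤ (i : ℕ) then (m : ℕ) else l + (i : ℕ) + 1 - (m : ℕ) := by
  rw [rotσ]; split_ifs <;> rfl

lemma rotπ_val {l : ℕ} (i : Fin l) (m : Fin l) :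
    (rotπ i m : ℕ) = if (m : ℕ) ≤ (i : ℕ) then (m : ℕ) else l + (i : ℕ) - (m : ℕ) := by
  rw [rotπ]; split_ifs <;> rfl

lemma rotσ_invol {l : ℕ} (i : Fin l) (m : Fin (l+1)) : rotσ i (rotσ i m) = m := by
  have hi := i.isLt; have hm := m.isLt
  apply Fin.ext
  rw [rotσ_val, rotσ_val]
  split_ifs with h1 h2 h2 <;> omega

lemma rotπ_invol {l : ℕ} (i : Fin l) (m : Fin l) : rotπ i (rotπ i m) = m := by
  have hi := i.isLt; have hm := m.isLt
  apply Fin.ext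
  rw [rotπ_val, rotπ_val]
  split_ifs with h1 h2 h2 <;> omega

lemma rotσ_bij {l : ℕ} (i : Fin l) : Function.Bijective (rotσ i) :=
  Function.Involutive.bijective (rotσ_invol i)

lemma rotπ_bij {l : ℕ} (i : Fin l) : Function.Bijective (rotπ i) :=
  Function.Involutive.bijective (rotπ_invol i)

lemma rotσ_zero {l : ℕ} (i : Fin l) : rotσ i 0 = 0 := by
  apply Fin.ext; rw [rotσ_val]; simp

lemma rotσ_last {l : ℕ} (i : Fin l) : rotσ i (Fin.last l) = i.succ := by
  have hi := i.isLt
  apply Fin.ext; rw [rotσ_val]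
  simp only [Fin.val_last, Fin.val_succ]
  split_ifs with h <;> omega

lemma rotσ_castSucc_le {l : ℕ} (i : Fin l) (m : Fin l) (h : (m:ℕ) ≤ (i:ℕ)) :
    rotσ i m.castSucc = (rotπ i m).castSucc := by
  apply Fin.ext; rw [rotσ_val]
  simp only [Fin.coe_castSucc, rotπ_val]
  split_ifs with h1 h2 <;> omega

lemma rotσ_succ_lt {l : ℕ} (i : Fin l) (m : Fin l) (h : (m:ℕ) < (i:ℕ)) :
    rotσ i m.succ = (rotπ i m).succ := by
  have hi := i.isLt
  apply Fin.ext; rw [rotσ_val]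
  simp only [Fin.val_succ, rotπ_val]
  split_ifs with h1 h2 <;> omega

lemma rotσ_succ_eq {l : ℕ} (i : Fin l) : rotσ i i.succ = Fin.last l := by
  have hi := i.isLt
  apply Fin.ext; rw [rotσ_val]
  simp only [Fin.val_succ, Fin.val_last]
  split_ifs with h <;> omega

lemma rotπ_eq {l : ℕ} (i : Fin l) : rotπ i i = i := by
  apply Fin.ext; rw [rotπ_val]; simp

lemma rotσ_castSucc_gt {l : ℕ} (i : Fin l) (m : Fin l) (h : (i:ℕ) < (m:ℕ)) :
    rotσ i m.castSucc = (rotπ i m).succ := by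
  have hi := i.isLt; have hm := m.isLt
  apply Fin.ext; rw [rotσ_val]
  simp only [Fin.coe_castSucc, Fin.val_succ, rotπ_val]
  split_ifs with h1 h2 <;> omega

lemma rotσ_succ_gt {l : ℕ} (i : Fin l) (m : Fin l) (h : (i:ℕ) < (m:ℕ)) :
    rotσ i m.succ = (rotπ i m).castSucc := by
  have hi := i.isLt; have hm := m.isLt
  apply Fin.ext; rw [rotσ_val]
  simp only [Fin.coe_castSucc, Fin.val_succ, rotπ_val]
  split_ifs with h1 h2 <;> omega

/-- Paths reachable from `(vp, ep)` by Pósa rotations. -/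
inductive Reach {V : Type*} {l : ℕ} (vp : Fin (l+1) → V) (ep : Fin l → Finset V) :
    (Fin (l+1) → V) → (Fin l → Finset V) → Prop
  | base : Reach vp ep vp ep
  | rot (w : Fin (l+1) → V) (f : Fin l → Finset V) (i : Fin l)
      (h : Reach vp ep w f) (ht : w (Fin.last l) ∈ f i) :
      Reach vp ep (w ∘ rotσ i) (f ∘ rotπ i)

/-- `t` is an attainable terminal vertex. -/
def IsEnd {V : Type*} {l : ℕ} (vp : Fin (l+1) → V) (ep : Fin l → Finset V) (t : V) : Prop :=
  ∃ w f, Reach vp ep w f ∧ w (Fin.last l) = t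

lemma reach_path {V : Type*} [DecidableEq V] {E : Finset (Finset V)} {l : ℕ}
    {vp : Fin (l+1) → V} {ep : Fin l → Finset V} (hP : IsBergePath E l vp ep)
    {w : Fin (l+1) → V} {f : Fin l → Finset V} (h : Reach vp ep w f) :
    IsBergePath E l w f ∧ w 0 = vp 0 ∧
      Set.range w = Set.range vp ∧ Set.range f = Set.range ep := by
  induction h with
  | base => exact ⟨hP, rfl, rfl, rfl⟩
  | rot w f i h ht ih =>
    obtain ⟨⟨hwinj, hfinj, hfE, hinc⟩, hw0, hrw, hrf⟩ := ih
    refine ⟨⟨hwinj.comp (rotσ_bij i).1, hfinj.comp (rotπ_bij i).1,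
        fun m => hfE _, fun m => ?_⟩, ?_, ?_, ?_⟩
    · rcases lt_trichotomy (m : ℕ) (i : ℕ) with hc | hc | hc
      · simp only [Function.comp_apply, rotσ_castSucc_le i m hc.le, rotσ_succ_lt i m hc]
        exact hinc (rotπ i m)
      · have hmi : m = i := Fin.ext hc
        subst hmi
        simp only [Function.comp_apply, rotσ_castSucc_le m m le_rfl, rotσ_succ_eq, rotπ_eq]
        exact ⟨(hinc m).1, ht⟩
      · simp only [Function.comp_apply, rotσ_castSucc_gt i m hc, rotσ_succ_gt i m hc]
        exact ⟨(hinc (rotπ i m)).2, (hinc (rotπ i m)).1⟩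
    · simp only [Function.comp_apply, rotσ_zero, hw0]
    · rw [Set.range_comp, (rotσ_bij i).2.range_eq, Set.image_univ, hrw]
    · rw [Set.range_comp, (rotπ_bij i).2.range_eq, Set.image_univ, hrf]

lemma reach_rot_end {V : Type*} {l : ℕ} {vp : Fin (l+1) → V} {ep : Fin l → Finset V}
    {w : Fin (l+1) → V} {f : Fin l → Finset V} (h : Reach vp ep w f)
    (i : Fin l) (ht : w (Fin.last l) ∈ f i) : IsEnd vp ep (w i.succ) :=
  ⟨w ∘ rotσ i, f ∘ rotπ i, Reach.rot w f i h ht, by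
    simp only [Function.comp_apply, rotσ_last]⟩

lemma invariantC {V : Type*} [DecidableEq V] {E : Finset (Finset V)} {l : ℕ}
    {vp : Fin (l+1) → V} {ep : Fin l → Finset V} (hP : IsBergePath E l vp ep)
    {w : Fin (l+1) → V} {f : Fin l → Finset V} (h : Reach vp ep w f) :
    ∀ (i j : Fin l), f j = ep i →
      ((w j.castSucc = vp i.castSucc ∧ w j.succ = vp i.succ) ∨
       (w j.castSucc = vp i.succ ∧ w j.succ = vp i.castSucc) ∨
       IsEnd vp ep (vp i.castSucc) ∨ IsEnd vp ep (vp i.succ)) := by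
  induction h with
  | base =>
    intro i j hj
    have : j = i := hP.2.1 hj
    subst this
    exact Or.inl ⟨rfl, rfl⟩
  | rot w f i₀ h ht ih =>
    intro i j hj
    simp only [Function.comp_apply] at hj
    rcases ih i (rotπ i₀ j) hj with hcase | hcase | hcase | hcase
    · rcases lt_trichotomy (j : ℕ) (i₀ : ℕ) with hc | hc | hc
      · left
        rw [Function.comp_apply, Function.comp_apply,
          rotσ_castSucc_le i₀ j hc.le, rotσ_succ_lt i₀ j hc]
        exact hcase
      · have hji : j = i₀ := Fin.ext hc
        subst hji
        rw [rotπ_eq] at hcase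
        exact Or.inr (Or.inr (Or.inr (hcase.2 ▸ reach_rot_end h j ht)))
      · right; left
        rw [Function.comp_apply, Function.comp_apply,
          rotσ_castSucc_gt i₀ j hc, rotσ_succ_gt i₀ j hc]
        exact ⟨hcase.2, hcase.1⟩
    · rcases lt_trichotomy (j : ℕ) (i₀ : ℕ) with hc | hc | hc
      · right; left
        rw [Function.comp_apply, Function.comp_apply,
          rotσ_castSucc_le i₀ j hc.le, rotσ_succ_lt i₀ j hc]
        exact hcase
      · have hji : j = i₀ := Fin.ext hc
        subst hji
        rw [rotπ_eq] at hcase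
        exact Or.inr (Or.inr (Or.inl (hcase.2 ▸ reach_rot_end h j ht)))
      · left
        rw [Function.comp_apply, Function.comp_apply,
          rotσ_castSucc_gt i₀ j hc, rotσ_succ_gt i₀ j hc]
        exact ⟨hcase.2, hcase.1⟩
    · exact Or.inr (Or.inr (Or.inl hcase))
    · exact Or.inr (Or.inr (Or.inr hcase))

lemma starD {V : Type*} [DecidableEq V] {E : Finset (Finset V)} {l : ℕ}
    {vp : Fin (l+1) → V} {ep : Fin l → Finset V} (hP : IsBergePath E l vp ep)
    {t : V} (ht : IsEnd vp ep t) {i : Fin l} (hti : t ∈ ep i) :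
    IsEnd vp ep (vp i.castSucc) ∨ IsEnd vp ep (vp i.succ) := by
  obtain ⟨w, f, hr, hend⟩ := ht
  have hrange := (reach_path hP hr).2.2.2
  have : ep i ∈ Set.range f := by rw [hrange]; exact Set.mem_range_self i
  obtain ⟨j, hj⟩ := this
  have htj : w (Fin.last l) ∈ f j := by rw [hj, hend]; exact hti
  have hend2 : IsEnd vp ep (w j.succ) := reach_rot_end hr j htj
  rcases invariantC hP hr i j hj with hcase | hcase | hcase | hcase
  · exact Or.inr (hcase.2 ▸ hend2)
  · exact Or.inl (hcase.2 ▸ hend2)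
  · exact Or.inl hcase
  · exact Or.inr hcase

/-- Lemma 7: given a Berge path `P` of length `l` with terminal vertex `v0 = vp 0`,
there is a nonempty set `T` of endpoints of rearrangements of `P` starting at `v0`
(paths with the same defining vertices and edges as `P`) such that the number of
defining edges of `P` meeting `T` is at most `2|T| - 1`. -/
theorem stmt17 {V : Type*} [Fintype V] [DecidableEq V]
    (E : Finset (Finset V)) (l : ℕ)
    (vp : Fin (l + 1) → V) (ep : Fin l → Finset V)
    (hP : IsBergePath E l vp ep) :
    ∃ T : Finset V, T.Nonempty ∧
      (∀ t ∈ T, ∃ (vq : Fin (l + 1) → V) (eq' : Fin l → Finset V),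
        IsBergePath E l vq eq' ∧ vq 0 = vp 0 ∧
        Set.range vq = Set.range vp ∧ Set.range eq' = Set.range ep ∧
        vq (Fin.last l) = t) ∧
      ((Finset.univ.image ep).filter fun e => (e ∩ T).Nonempty).card ≤ 2 * T.card - 1 := by
  classical
  refine ⟨Finset.univ.filter (fun t => IsEnd vp ep t), ?_, ?_, ?_⟩
  · exact ⟨vp (Fin.last l), Finset.mem_filter.2 ⟨Finset.mem_univ _, vp, ep, Reach.base, rfl⟩⟩
  · intro t ht
    obtain ⟨w, f, hr, hend⟩ := (Finset.mem_filter.1 ht).2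
    obtain ⟨hbp, hw0, hrw, hrf⟩ := reach_path hP hr
    exact ⟨w, f, hbp, hw0, hrw, hrf, hend⟩
  · set T := Finset.univ.filter (fun t => IsEnd vp ep t) with hT
    have hTlast : vp (Fin.last l) ∈ T :=
      Finset.mem_filter.2 ⟨Finset.mem_univ _, vp, ep, Reach.base, rfl⟩
    set I := Finset.univ.filter (fun i : Fin l => (ep i ∩ T).Nonempty) with hI
    have hsub : (Finset.univ.image ep).filter (fun e => (e ∩ T).Nonempty) ⊆ I.image ep := by
      intro e he
      rw [Finset.mem_filter, Finset.mem_image] at he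
      obtain ⟨⟨i, _, hi⟩, hne⟩ := he
      exact Finset.mem_image.2 ⟨i, Finset.mem_filter.2 ⟨Finset.mem_univ _, hi ▸ hne⟩, hi⟩
    have h1 : ((Finset.univ.image ep).filter fun e => (e ∩ T).Nonempty).card ≤ I.card :=
      le_trans (Finset.card_le_card hsub) Finset.card_image_le
    set χ : Fin l → V × Bool :=
      fun i => if vp i.castSucc ∈ T then (vp i.castSucc, false) else (vp i.succ, true) with hχ
    have hmaps : ∀ i ∈ I, χ i ∈
        ((T ×ˢ (Finset.univ : Finset Bool)).erase (vp (Fin.last l), false)) := by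
      intro i hi
      obtain ⟨t, htmem⟩ := (Finset.mem_filter.1 hi).2
      rw [Finset.mem_inter] at htmem
      have htE : IsEnd vp ep t := (Finset.mem_filter.1 htmem.2).2
      have hD := starD hP htE htmem.1
      by_cases hc : vp i.castSucc ∈ T
      · have hχi : χ i = (vp i.castSucc, false) := by rw [hχ]; simp [hc]
        rw [hχi, Finset.mem_erase]
        refine ⟨?_, Finset.mem_product.2 ⟨hc, Finset.mem_univ _⟩⟩
        intro hcon
        have : vp i.castSucc = vp (Fin.last l) := congrArg Prod.fst hcon
        have h2 := hP.1 this
        exact absurd h2 (Fin.ne_of_lt (Fin.castSucc_lt_last i))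
      · have hsucc : vp i.succ ∈ T := by
          rcases hD with hD | hD
          · exact absurd (Finset.mem_filter.2 ⟨Finset.mem_univ _, hD⟩) hc
          · exact Finset.mem_filter.2 ⟨Finset.mem_univ _, hD⟩
        have hχi : χ i = (vp i.succ, true) := by rw [hχ]; simp [hc]
        rw [hχi, Finset.mem_erase]
        refine ⟨?_, Finset.mem_product.2 ⟨hsucc, Finset.mem_univ _⟩⟩
        intro hcon
        exact absurd (congrArg Prod.snd hcon) (by simp)
    have hinj : Set.InjOn χ I := by
      intro a _ b _ hab
      simp only [hχ] at hab
      by_cases ha : vp a.castSucc ∈ T <;> by_cases hb : vp b.castSucc ∈ T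
      · rw [if_pos ha, if_pos hb, Prod.mk.injEq] at hab
        exact Fin.castSucc_injective l (hP.1 hab.1)
      · rw [if_pos ha, if_neg hb, Prod.mk.injEq] at hab
        exact absurd hab.2 (by simp)
      · rw [if_neg ha, if_pos hb, Prod.mk.injEq] at hab
        exact absurd hab.2 (by simp)
      · rw [if_neg ha, if_neg hb, Prod.mk.injEq] at hab
        exact Fin.succ_injective l (hP.1 hab.1)
    have h2 : I.card ≤ ((T ×ˢ (Finset.univ : Finset Bool)).erase (vp (Fin.last l), false)).card :=
      Finset.card_le_card_of_injOn χ hmaps hinj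
    have h3 : ((T ×ˢ (Finset.univ : Finset Bool)).erase (vp (Fin.last l), false)).card
        = 2 * T.card - 1 := by
      rw [Finset.card_erase_of_mem (Finset.mem_product.2 ⟨hTlast, Finset.mem_univ _⟩),
        Finset.card_product, Finset.card_univ, Fintype.card_bool]
      ring_nf
    omega
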